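/- For every β ∈ (0, 1/2] and every c > 0 there exists a constant C > 0 (depending on β, c, η₁, θ) such that: whenever the step-size assumption holds with η₁ < 1 and θ < c e^{−c}/β, one has ∑_{k=K_n}^{n−1} η_k^{1+β}/√(t_n − t_k) ≤ C η_n^{β} for every n ≥ 2, where K_n := min{ k ≥ 1 : t_n − t_k ≤ 1 }. -/

import Mathlib

open Real Filter

private lemma tele_aux (g : ℕ → ℝ) {K n : ℕ} (h : K ≤ n) :
    ∑ k ∈ Finset.Ico K n, (g k - g (k + 1)) = g K - g n := by
  induction n, h using Nat.le_induction with
  | base => simp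
  | succ n hKn ih =>
    rw [Finset.sum_Ico_succ_top hKn, ih]
    ring

theorem stmt3 (β c θ η₁ : ℝ) (hβ0 : 0 < β) (hβ : β ≤ 1 / 2) (hc : 0 < c) (hθ : 0 < θ) :
    ∃ C > 0, ∀ η : ℕ → ℝ,
      η 1 = η₁ →
      (∀ n, 1 ≤ n → 0 < η n) →
      (∀ n, 1 ≤ n → η (n + 1) ≤ η n) →
      Tendsto η atTop (nhds 0) →
      Tendsto (fun n => ∑ k ∈ Finset.Icc 1 n, η k) atTop atTop →
      (∀ n, 2 ≤ n → η (n - 1) - η n ≤ θ * η n ^ 2) →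
      η 1 < 1 → θ < c * Real.exp (-c) / β →
      ∀ n, 2 ≤ n →
        -- `t m` denotes the partial sum `∑_{j=1}^m η_j`; `K n` is the first index `k ≥ 1`
        -- with `t n - t k ≤ 1`.
        (fun t : ℕ → ℝ =>
          ∑ k ∈ Finset.Ico (sInf {k : ℕ | 1 ≤ k ∧ t n - t k ≤ 1}) n,
              η k ^ (1 + β) / Real.sqrt (t n - t k))
          (fun m => ∑ j ∈ Finset.Icc 1 m, η j)
          ≤ C * η n ^ β := by
  set A : ℝ := Real.sqrt (1 + Real.exp θ) with hA
  have hA1 : 1 ≤ A := by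
    rw [hA]
    nlinarith [Real.sq_sqrt (show (0:ℝ) ≤ 1 + Real.exp θ by positivity),
      Real.sqrt_nonneg (1 + Real.exp θ), Real.exp_pos θ]
  refine ⟨Real.exp (θ * β) * (2 * A) * Real.sqrt 2, by positivity, ?_⟩
  intro η hη1 hpos hdec _ _ hstep hη1lt _ n hn
  set t : ℕ → ℝ := fun m => ∑ j ∈ Finset.Icc 1 m, η j with ht
  show ∑ k ∈ Finset.Ico (sInf {k : ℕ | 1 ≤ k ∧ t n - t k ≤ 1}) n,
      η k ^ (1 + β) / Real.sqrt (t n - t k) ≤ _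
  -- basic facts about t
  have ht_succ : ∀ m : ℕ, t (m + 1) = t m + η (m + 1) := by
    intro m
    exact Finset.sum_Icc_succ_top (by omega) η
  have htmono : ∀ a b : ℕ, a ≤ b → t a ≤ t b := by
    intro a b hab
    apply Finset.sum_le_sum_of_subset_of_nonneg (Finset.Icc_subset_Icc_right hab)
    intro i hi _
    exact (hpos i (Finset.mem_Icc.1 hi).1).le
  -- antitonicity of η on [1, ∞)
  have hanti : ∀ a b : ℕ, 1 ≤ a → a ≤ b → η b ≤ η a := by
    intro a b ha hab
    induction b, hab using Nat.le_induction with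
    | base => exact le_rfl
    | succ b hab ih => exact le_trans (hdec b (by omega)) ih
  -- comparison: η k ≤ exp (θ (t m - t k)) η m
  have hcomp : ∀ k : ℕ, 1 ≤ k → ∀ m : ℕ, k ≤ m →
      η k ≤ Real.exp (θ * (t m - t k)) * η m := by
    intro k hk m hkm
    induction m, hkm using Nat.le_induction with
    | base => simp
    | succ m hkm ih =>
      have hm1 : 1 ≤ m + 1 := by omega
      have hp := hpos (m + 1) hm1
      have h1 : η m ≤ Real.exp (θ * η (m + 1)) * η (m + 1) := by
        have hs := hstep (m + 1) (by omega)
        simp only [Nat.add_sub_cancel] at hs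
        have hexp := Real.add_one_le_exp (θ * η (m + 1))
        nlinarith [Real.exp_pos (θ * η (m + 1))]
      calc η k ≤ Real.exp (θ * (t m - t k)) * η m := ih
        _ ≤ Real.exp (θ * (t m - t k)) * (Real.exp (θ * η (m + 1)) * η (m + 1)) :=
            mul_le_mul_of_nonneg_left h1 (Real.exp_pos _).le
        _ = Real.exp (θ * (t (m + 1) - t k)) * η (m + 1) := by
            rw [ht_succ m, ← mul_assoc, ← Real.exp_add]
            ring_nf
  -- the index K
  set K : ℕ := sInf {k : ℕ | 1 ≤ k ∧ t n - t k ≤ 1} with hKdef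
  have hmemS : n ∈ {k : ℕ | 1 ≤ k ∧ t n - t k ≤ 1} := ⟨by omega, by simp⟩
  have hKmem : K ∈ {k : ℕ | 1 ≤ k ∧ t n - t k ≤ 1} := Nat.sInf_mem ⟨n, hmemS⟩
  have hK1 : 1 ≤ K := hKmem.1
  have hKt : t n - t K ≤ 1 := hKmem.2
  have hKn : K ≤ n := Nat.sInf_le hmemS
  have hηn : 0 < η n := hpos n (by omega)
  set g : ℕ → ℝ := fun k => Real.sqrt (t n - t (k - 1)) with hg
  set D : ℝ := Real.exp (θ * β) * η n ^ β * (2 * A) with hD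
  have hD0 : 0 ≤ D := by positivity
  -- per-term bound
  have hterm : ∀ k ∈ Finset.Ico K n,
      η k ^ (1 + β) / Real.sqrt (t n - t k) ≤ D * (g k - g (k + 1)) := by
    intro k hk
    obtain ⟨hKk, hkn⟩ := Finset.mem_Ico.1 hk
    have hk1 : 1 ≤ k := le_trans hK1 hKk
    have hηk : 0 < η k := hpos k hk1
    obtain ⟨m, rfl⟩ : ∃ m, n = m + 1 := ⟨n - 1, by omega⟩
    have ha0 : η (m + 1) ≤ t (m + 1) - t k := by
      have := ht_succ m
      have := htmono k m (by omega)
      linarith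
    have ha : 0 < t (m + 1) - t k := lt_of_lt_of_le hηn ha0
    have htnk1 : t (m + 1) - t k ≤ 1 := by
      have := htmono K k hKk
      linarith
    have hηke : η k ≤ Real.exp θ * η (m + 1) := by
      have h1 := hcomp k hk1 (m + 1) (by omega)
      have h2 : Real.exp (θ * (t (m + 1) - t k)) ≤ Real.exp θ := by
        apply Real.exp_le_exp.2
        nlinarith
      calc η k ≤ Real.exp (θ * (t (m + 1) - t k)) * η (m + 1) := h1
        _ ≤ Real.exp θ * η (m + 1) := mul_le_mul_of_nonneg_right h2 hηn.le
    obtain ⟨j, rfl⟩ : ∃ j, k = j + 1 := ⟨k - 1, by omega⟩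
    have hb : t (m + 1) - t ((j + 1) - 1) = (t (m + 1) - t (j + 1)) + η (j + 1) := by
      simp only [Nat.add_sub_cancel]
      have := ht_succ j
      linarith
    set a : ℝ := t (m + 1) - t (j + 1) with haa
    set b : ℝ := t (m + 1) - t ((j + 1) - 1) with hbb
    have hb0 : 0 < b := by rw [hb]; linarith
    have hble : b ≤ (1 + Real.exp θ) * a := by
      rw [hb]
      have := mul_le_mul_of_nonneg_left ha0 (Real.exp_pos θ).le
      linarith
    have hsb : Real.sqrt b ≤ A * Real.sqrt a := by
      rw [hA, ← Real.sqrt_mul (by positivity)]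
      exact Real.sqrt_le_sqrt hble
    have hsa0 : 0 < Real.sqrt a := Real.sqrt_pos.2 ha
    have hdiffnn : 0 ≤ Real.sqrt b - Real.sqrt a := by
      have : a ≤ b := by rw [hb]; linarith
      linarith [Real.sqrt_le_sqrt this]
    have e1 : Real.sqrt b ^ 2 = b := Real.sq_sqrt hb0.le
    have e2 : Real.sqrt a ^ 2 = a := Real.sq_sqrt ha.le
    have hsum_le : Real.sqrt b + Real.sqrt a ≤ 2 * A * Real.sqrt a := by
      have h3 : Real.sqrt a ≤ A * Real.sqrt a := le_mul_of_one_le_left hsa0.le hA1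
      linarith
    have hid : (Real.sqrt b - Real.sqrt a) * (Real.sqrt b + Real.sqrt a) = η (j + 1) := by
      linear_combination e1 - e2 + hb
    have hkey : η (j + 1) ≤ (Real.sqrt b - Real.sqrt a) * (2 * A * Real.sqrt a) := by
      calc η (j + 1) = (Real.sqrt b - Real.sqrt a) * (Real.sqrt b + Real.sqrt a) := hid.symm
        _ ≤ (Real.sqrt b - Real.sqrt a) * (2 * A * Real.sqrt a) :=
            mul_le_mul_of_nonneg_left hsum_le hdiffnn
    -- rewrite the power
    have hpow : η (j + 1) ^ (1 + β) = η (j + 1) ^ β * η (j + 1) := by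
      rw [Real.rpow_add hηk, Real.rpow_one, mul_comm]
    have h1 : η (j + 1) ^ β ≤ Real.exp (θ * β) * η (m + 1) ^ β := by
      calc η (j + 1) ^ β ≤ (Real.exp θ * η (m + 1)) ^ β :=
            Real.rpow_le_rpow hηk.le hηke hβ0.le
        _ = Real.exp (θ * β) * η (m + 1) ^ β := by
            rw [Real.mul_rpow (Real.exp_pos θ).le hηn.le, Real.exp_mul]
    have h2 : η (j + 1) / Real.sqrt a ≤ 2 * A * (Real.sqrt b - Real.sqrt a) := by
      rw [div_le_iff₀ hsa0]
      nlinarith [hkey]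
    have hgk : g (j + 1) = Real.sqrt b := rfl
    have hgk1 : g (j + 1 + 1) = Real.sqrt a := by
      simp only [hg, Nat.add_sub_cancel]
      rfl
    rw [hgk, hgk1, hpow, mul_div_assoc]
    have hfin : η (j + 1) ^ β * (η (j + 1) / Real.sqrt a) ≤
        (Real.exp (θ * β) * η (m + 1) ^ β) * (2 * A * (Real.sqrt b - Real.sqrt a)) := by
      apply mul_le_mul h1 h2 (by positivity) (by positivity)
    calc η (j + 1) ^ β * (η (j + 1) / Real.sqrt a) ≤
        (Real.exp (θ * β) * η (m + 1) ^ β) * (2 * A * (Real.sqrt b - Real.sqrt a)) := hfin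
      _ = D * (Real.sqrt b - Real.sqrt a) := by rw [hD]; ring
  -- sum it up
  have hsum : ∑ k ∈ Finset.Ico K n, η k ^ (1 + β) / Real.sqrt (t n - t k)
      ≤ D * (g K - g n) := by
    calc ∑ k ∈ Finset.Ico K n, η k ^ (1 + β) / Real.sqrt (t n - t k)
        ≤ ∑ k ∈ Finset.Ico K n, D * (g k - g (k + 1)) := Finset.sum_le_sum hterm
      _ = D * ∑ k ∈ Finset.Ico K n, (g k - g (k + 1)) := by rw [Finset.mul_sum]
      _ = D * (g K - g n) := by rw [tele_aux g hKn]
  have hgK : g K ≤ Real.sqrt 2 := by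
    apply Real.sqrt_le_sqrt
    obtain ⟨j, hj⟩ : ∃ j, K = j + 1 := ⟨K - 1, by omega⟩
    have h1 : t (j + 1) = t j + η (j + 1) := ht_succ j
    have h2 : η (j + 1) ≤ η 1 := hanti 1 (j + 1) le_rfl (by omega)
    rw [hj] at hKt ⊢
    simp only [Nat.add_sub_cancel]
    linarith
  have hgn : 0 ≤ g n := Real.sqrt_nonneg _
  calc ∑ k ∈ Finset.Ico K n, η k ^ (1 + β) / Real.sqrt (t n - t k)
      ≤ D * (g K - g n) := hsum
    _ ≤ D * Real.sqrt 2 := mul_le_mul_of_nonneg_left (by linarith) hD0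
    _ = Real.exp (θ * β) * (2 * A) * Real.sqrt 2 * η n ^ β := by rw [hD]; ring
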